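/- Let p ∈ (1/2, 1), q = 1 - p, d ≥ 1, and let b⁽ᵏ⁾ᵢ = ((p/q)^{i-1}/(p-q)) · ((p/q) - 1)((p/q)^{k+1-i} - 1)/((p/q)^{k+1} - 1) for 1 ≤ i ≤ k ≤ d. Then for all such i, k, b⁽ᵏ⁾ᵢ ≥ (p - q)/p² > 0 and b⁽ᵏ⁾ᵢ ≤ p/(p - q). -/

import Mathlib

/-- Bounds on the renormalized drift vector of the projected asymmetric Atlas gap process. -/
theorem asymmetric_atlas_drift_bounds (d : ℕ) (hd : 1 ≤ d) (p q : ℝ)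
    (hp : 1 / 2 < p) (hp1 : p < 1) (hq : q = 1 - p)
    (i k : ℕ) (hi : 1 ≤ i) (hik : i ≤ k) (hkd : k ≤ d)
    (b : ℝ)
    (hb : b = ((p / q) ^ (i - 1) / (p - q)) *
      ((p / q - 1) * ((p / q) ^ (k + 1 - i) - 1) / ((p / q) ^ (k + 1) - 1))) :
    (p - q) / p ^ 2 ≤ b ∧ 0 < (p - q) / p ^ 2 ∧ b ≤ p / (p - q) := by
  have hq0 : 0 < q := by rw [hq]; linarith
  have hpq : 0 < p - q := by rw [hq]; linarith
  have hp0 : 0 < p := by linarith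
  set R := p / q with hRdef
  have hR1 : 1 < R := (one_lt_div hq0).2 (by linarith)
  have hR0 : 0 < R := by linarith
  have hqR : q * R = p := by rw [hRdef]; field_simp [hq0.ne']
  obtain ⟨j, t, rfl, rfl⟩ : ∃ j t, i = j + 1 ∧ k = j + t + 1 :=
    ⟨i - 1, k - i, by omega, by omega⟩
  have e1 : R ^ (j + 1 - 1) = R ^ j := by norm_num
  have e2 : R ^ (j + t + 1 + 1 - (j + 1)) = R ^ t * R := by
    have : j + t + 1 + 1 - (j + 1) = t + 1 := by omega
    rw [this, pow_succ]
  have e3 : R ^ (j + t + 1 + 1) = R ^ j * R ^ t * R ^ 2 := by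
    have : j + t + 1 + 1 = j + (t + 2) := by omega
    rw [this, pow_add, pow_add]; ring
  rw [e1, e2, e3] at hb
  have hA1 : 1 ≤ R ^ j := one_le_pow₀ hR1.le
  have hB1 : 1 ≤ R ^ t := one_le_pow₀ hR1.le
  generalize hAg : R ^ j = A at hb hA1
  generalize hBg : R ^ t = B at hb hB1
  have hA0 : 0 < A := by linarith
  have hB0 : 0 < B := by linarith
  have hAB : 1 ≤ A * B := by nlinarith
  have hD0 : 0 < A * B * R ^ 2 - 1 := by nlinarith [mul_le_mul_of_nonneg_right hAB (sq_nonneg R)]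
  have hbeq : b = (A * (R - 1) * (B * R - 1)) / ((p - q) * (A * B * R ^ 2 - 1)) := by
    rw [hb]; field_simp
  refine ⟨?_, by positivity, ?_⟩
  · rw [hbeq, div_le_div_iff₀ (by positivity) (by positivity)]
    rw [← hqR]
    nlinarith [mul_nonneg (mul_nonneg (mul_nonneg (sq_nonneg q) hA0.le) (sq_nonneg R))
        (sub_nonneg.2 hB1),
      mul_nonneg (sq_nonneg q) (sub_nonneg.2 hR1.le)]
  · rw [hbeq, div_le_div_iff₀ (by positivity) hpq]
    have h2 : q * (A * B * R ^ 2) = p * (A * B * R) := by rw [← hqR]; ring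
    have h4 : q * (A * B * R ^ 2) = A * B * R ^ 2 - p * (A * B * R ^ 2) := by
      rw [hq]; ring
    have h5 : q * (A * B * R) = A * B * R - p * (A * B * R) := by rw [hq]; ring
    have key : A * (R - 1) * (B * R - 1) ≤ p * (A * B * R ^ 2 - 1) := by
      nlinarith [h2, h4, h5, hqR,
        mul_nonneg (mul_nonneg hq0.le hR0.le) (sub_nonneg.2 hAB),
        mul_nonneg hA0.le (sub_nonneg.2 hR1.le)]
    calc A * (R - 1) * (B * R - 1) * (p - q)
        ≤ p * (A * B * R ^ 2 - 1) * (p - q) := mul_le_mul_of_nonneg_right key hpq.le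
      _ = p * ((p - q) * (A * B * R ^ 2 - 1)) := by ring
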